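/- For any admissible sequence of partitions (𝒜_n) of a metric space (A, ρ), and any ε > 0, one has sup_{a ∈ A} Σ_{n≥0} 2^{n/2} diam(𝒜_n(a)) ≥ (1/√2) · ε · √(log N(A, ρ, ε)). Consequently γ₂(A, ρ) ≥ (1/√2) · ε · √(log N(A, ρ, ε)) for every ε > 0. -/

import Mathlib

open Set ENNReal

variable (α : Type*) [PseudoMetricSpace α]

/-- Covering number of the whole space at scale `ε` (junk value `0` if no finite cover
exists). -/
noncomputable def coveringNumber (ε : ℝ) : ℕ :=
  sInf {n : ℕ | ∃ C : Finset α, (∀ a : α, ∃ c ∈ C, dist a c ≤ ε) ∧ C.card = n}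

variable {α}

/-- An admissible sequence of partitions: an increasing sequence of partitions with
`|𝒜 0| = 1` and `|𝒜 n| ≤ 2 ^ (2 ^ n)` for `n ≥ 1`. -/
def IsAdmissible (𝒜 : ℕ → Set (Set α)) : Prop :=
  (∀ n, Setoid.IsPartition (𝒜 n)) ∧ (𝒜 0).encard = 1 ∧
    (∀ n, 1 ≤ n → (𝒜 n).encard ≤ 2 ^ (2 ^ n)) ∧
    (∀ n, ∀ B ∈ 𝒜 (n + 1), ∃ C ∈ 𝒜 n, B ⊆ C)

/-- A cell selector for `𝒜`: `c n a` is the cell of the partition `𝒜 n` containing `a`. -/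
def IsCellOf (𝒜 : ℕ → Set (Set α)) (c : ℕ → α → Set α) : Prop :=
  ∀ n a, c n a ∈ 𝒜 n ∧ a ∈ c n a

variable (α) in
/-- Talagrand's functional
`γ₂ = inf sup_a Σ_n 2^{n/2} diam(𝒜_n(a))`, the infimum being over admissible
sequences of partitions. -/
noncomputable def gamma2 : ℝ≥0∞ :=
  ⨅ (p : {p : (ℕ → Set (Set α)) × (ℕ → α → Set α) //
      IsAdmissible p.1 ∧ IsCellOf p.1 p.2}),
    ⨆ a : α, ∑' n : ℕ, (2 : ℝ≥0∞) ^ ((n : ℝ) / 2) * EMetric.diam (p.1.2 n a)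

/-- The cell containing `a` is unique. -/
lemma cell_unique' {𝒜 : ℕ → Set (Set α)} {c : ℕ → α → Set α} (hA : IsAdmissible 𝒜)
    (hc : IsCellOf 𝒜 c) {k : ℕ} {B : Set α} (hB : B ∈ 𝒜 k) {a : α} (ha : a ∈ B) :
    c k a = B := by
  obtain ⟨b, _, hbu⟩ := (hA.1 k).2 a
  rw [hbu _ ⟨(hc k a).1, (hc k a).2⟩, hbu _ ⟨hB, ha⟩]

/-- A single cell's contribution lower-bounds the supremum. -/
lemma le_sup_of_cell' {𝒜 : ℕ → Set (Set α)} {c : ℕ → α → Set α} (hA : IsAdmissible 𝒜)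
    (hc : IsCellOf 𝒜 c) {k : ℕ} {B : Set α} (hB : B ∈ 𝒜 k) :
    (2 : ℝ≥0∞) ^ ((k : ℝ) / 2) * EMetric.diam B ≤
      ⨆ a : α, ∑' n : ℕ, (2 : ℝ≥0∞) ^ ((n : ℝ) / 2) * EMetric.diam (c n a) := by
  have hBne : B.Nonempty :=
    Set.nonempty_iff_ne_empty.2 (fun h => (hA.1 k).1 (h ▸ hB))
  obtain ⟨a, ha⟩ := hBne
  calc (2 : ℝ≥0∞) ^ ((k : ℝ) / 2) * EMetric.diam B
      = (2 : ℝ≥0∞) ^ ((k : ℝ) / 2) * EMetric.diam (c k a) := by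
        rw [cell_unique' hA hc hB ha]
    _ ≤ ∑' n : ℕ, (2 : ℝ≥0∞) ^ ((n : ℝ) / 2) * EMetric.diam (c n a) :=
        ENNReal.le_tsum k
    _ ≤ ⨆ a : α, ∑' n : ℕ, (2 : ℝ≥0∞) ^ ((n : ℝ) / 2) * EMetric.diam (c n a) :=
        le_iSup (fun a : α => ∑' n : ℕ, (2 : ℝ≥0∞) ^ ((n : ℝ) / 2) * EMetric.diam (c n a)) a

/-- If some level of the partition has all cells of diameter at most `ε`, the covering
number is bounded by the number of cells. -/
lemma coveringNumber_le' {ε : ℝ} (hε : 0 ≤ ε) {𝒜 : ℕ → Set (Set α)} (hA : IsAdmissible 𝒜)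
    {n m : ℕ} (hcard : (𝒜 n).encard ≤ (m : ℕ∞))
    (hP : ∀ B ∈ 𝒜 n, EMetric.diam B ≤ ENNReal.ofReal ε) :
    coveringNumber α ε ≤ m := by
  classical
  have hF : (𝒜 n).Finite := Set.finite_of_encard_le_coe hcard
  have hne : ∀ B ∈ 𝒜 n, B.Nonempty := fun B hB =>
    Set.nonempty_iff_ne_empty.2 fun h => (hA.1 n).1 (h ▸ hB)
  set C : Finset α := hF.toFinset.attach.image
    (fun B => (hne B.1 (hF.mem_toFinset.1 B.2)).choose) with hC
  have hcov : ∀ a : α, ∃ c ∈ C, dist a c ≤ ε := by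
    intro a
    obtain ⟨B, ⟨hB, haB⟩, _⟩ := (hA.1 n).2 a
    refine ⟨_, Finset.mem_image.2
      ⟨⟨B, hF.mem_toFinset.2 hB⟩, Finset.mem_attach _ _, rfl⟩, ?_⟩
    have hmem := (hne B ((hF.mem_toFinset).1 (hF.mem_toFinset.2 hB))).choose_spec
    have h1 : edist a _ ≤ EMetric.diam B := EMetric.edist_le_diam_of_mem haB hmem
    have h2 := h1.trans (hP B hB)
    rw [edist_dist] at h2
    exact (ENNReal.ofReal_le_ofReal_iff hε).1 h2
  have hle : coveringNumber α ε ≤ C.card := Nat.sInf_le ⟨C, hcov, rfl⟩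
  refine hle.trans ?_
  have h1 : C.card ≤ hF.toFinset.attach.card := Finset.card_image_le
  rw [Finset.card_attach] at h1
  refine h1.trans ?_
  have := hF.encard_eq_coe_toFinset_card ▸ hcard
  exact_mod_cast this

/-- Main lower bound for a fixed admissible sequence. -/
lemma gamma2_main_bound' {ε : ℝ} (hε : 0 < ε) (𝒜 : ℕ → Set (Set α)) (c : ℕ → α → Set α)
    (hA : IsAdmissible 𝒜) (hc : IsCellOf 𝒜 c) :
    ENNReal.ofReal (ε * Real.sqrt (Real.log (coveringNumber α ε)) / Real.sqrt 2) ≤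
      ⨆ a : α, ∑' n : ℕ, (2 : ℝ≥0∞) ^ ((n : ℝ) / 2) * EMetric.diam (c n a) := by
  classical
  set D := ⨆ a : α, ∑' n : ℕ, (2 : ℝ≥0∞) ^ ((n : ℝ) / 2) * EMetric.diam (c n a) with hD
  by_cases hP : ∃ n, ∀ B ∈ 𝒜 n, EMetric.diam B ≤ ENNReal.ofReal ε
  · have hPm := Nat.find_spec hP
    cases hm : Nat.find hP with
    | zero =>
      rw [hm] at hPm
      have hcard : (𝒜 0).encard ≤ ((1 : ℕ) : ℕ∞) := by rw [hA.2.1]; simp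
      have hN : coveringNumber α ε ≤ 1 := coveringNumber_le' hε.le hA hcard hPm
      have hlog : Real.log (coveringNumber α ε) = 0 := by
        interval_cases h : coveringNumber α ε <;> simp
      rw [hlog]
      simp
    | succ k =>
      have hklt : k < Nat.find hP := by rw [hm]; exact k.lt_succ_self
      have hNk := Nat.find_min hP hklt
      push_neg at hNk
      obtain ⟨B, hB, hdB⟩ := hNk
      rw [hm] at hPm
      have h1 : (2 : ℝ≥0∞) ^ ((k : ℝ) / 2) * ENNReal.ofReal ε ≤ D :=
        le_trans (mul_le_mul_right hdB.le _) (le_sup_of_cell' hA hc hB)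
      have hcard : (𝒜 (k + 1)).encard ≤ ((2 ^ 2 ^ (k + 1) : ℕ) : ℕ∞) := by
        have := hA.2.2.1 (k + 1) (by omega)
        exact_mod_cast this
      have hN : coveringNumber α ε ≤ 2 ^ 2 ^ (k + 1) :=
        coveringNumber_le' hε.le hA hcard hPm
      have hlogN : Real.log (coveringNumber α ε) ≤ (2 : ℝ) ^ (k + 1) := by
        rcases Nat.eq_zero_or_pos (coveringNumber α ε) with h | h
        · rw [h]; simp
        · have hlog2 : Real.log 2 ≤ 1 := by
            have := Real.log_le_sub_one_of_pos (by norm_num : (0:ℝ) < 2)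
            linarith
          calc Real.log (coveringNumber α ε) ≤ Real.log ((2 : ℝ) ^ 2 ^ (k + 1)) :=
                Real.log_le_log (by exact_mod_cast h) (by exact_mod_cast hN)
            _ = (2 : ℝ) ^ (k + 1) * Real.log 2 := by
                rw [Real.log_pow]; push_cast; ring
            _ ≤ (2 : ℝ) ^ (k + 1) := by nlinarith [pow_pos (by norm_num : (0:ℝ) < 2) (k+1)]
      have hreal : ε * Real.sqrt (Real.log (coveringNumber α ε)) / Real.sqrt 2
          ≤ ε * (2 : ℝ) ^ ((k : ℝ) / 2) := by
        have h2 : Real.sqrt (Real.log (coveringNumber α ε))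
            ≤ Real.sqrt ((2 : ℝ) ^ (k + 1)) := Real.sqrt_le_sqrt hlogN
        have h3 : Real.sqrt ((2 : ℝ) ^ (k + 1)) = (2 : ℝ) ^ (((k : ℝ) + 1) / 2) := by
          rw [Real.sqrt_eq_rpow, ← Real.rpow_natCast 2 (k + 1),
            ← Real.rpow_mul (by norm_num : (0:ℝ) ≤ 2)]
          push_cast
          ring_nf
        have h4 : (2 : ℝ) ^ (((k : ℝ) + 1) / 2) / Real.sqrt 2 = (2 : ℝ) ^ ((k : ℝ) / 2) := by
          rw [Real.sqrt_eq_rpow, ← Real.rpow_sub (by norm_num : (0:ℝ) < 2)]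
          ring_nf
        calc ε * Real.sqrt (Real.log (coveringNumber α ε)) / Real.sqrt 2
            ≤ ε * (2 : ℝ) ^ (((k : ℝ) + 1) / 2) / Real.sqrt 2 := by
              have hs2 : (0:ℝ) < Real.sqrt 2 := Real.sqrt_pos.2 (by norm_num)
              have := mul_le_mul_of_nonneg_left (h2.trans h3.le) hε.le
              exact div_le_div_of_nonneg_right this hs2.le |>.trans_eq rfl
          _ = ε * (2 : ℝ) ^ ((k : ℝ) / 2) := by
              rw [mul_div_assoc, h4]
      calc ENNReal.ofReal (ε * Real.sqrt (Real.log (coveringNumber α ε)) / Real.sqrt 2)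
          ≤ ENNReal.ofReal (ε * (2 : ℝ) ^ ((k : ℝ) / 2)) := ENNReal.ofReal_le_ofReal hreal
        _ = (2 : ℝ≥0∞) ^ ((k : ℝ) / 2) * ENNReal.ofReal ε := by
            rw [ENNReal.ofReal_mul hε.le, ← ENNReal.ofReal_rpow_of_pos (by norm_num : (0:ℝ) < 2)]
            rw [ENNReal.ofReal_ofNat, mul_comm]
        _ ≤ D := h1
  · push_neg at hP
    have key : ∀ m : ℕ, (m : ℝ≥0∞) * ENNReal.ofReal ε ≤ D := by
      intro m
      obtain ⟨B, hB, hdB⟩ := hP (2 * m)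
      have h1 : (2 : ℝ≥0∞) ^ (((2 * m : ℕ) : ℝ) / 2) * ENNReal.ofReal ε ≤ D :=
        le_trans (mul_le_mul_right hdB.le _) (le_sup_of_cell' hA hc hB)
      have h2 : (m : ℝ≥0∞) ≤ (2 : ℝ≥0∞) ^ (((2 * m : ℕ) : ℝ) / 2) := by
        have he : (((2 * m : ℕ) : ℝ) / 2) = ((m : ℕ) : ℝ) := by push_cast; ring
        rw [he, ENNReal.rpow_natCast]
        exact_mod_cast (Nat.lt_two_pow_self (n := m)).le
      exact le_trans (mul_le_mul_left h2 _) h1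
    have hDtop : D = ⊤ := by
      by_contra hDt
      have hc0 : ENNReal.ofReal ε ≠ 0 := by
        simp [ENNReal.ofReal_eq_zero]; linarith
      have hall : ∀ m : ℕ, (m : ℝ≥0∞) ≤ D / ENNReal.ofReal ε := fun m =>
        (ENNReal.le_div_iff_mul_le (Or.inl hc0) (Or.inl ENNReal.ofReal_ne_top)).2 (key m)
      have htop : (⊤ : ℝ≥0∞) ≤ D / ENNReal.ofReal ε := by
        rw [← ENNReal.iSup_natCast]; exact iSup_le hall
      rw [top_le_iff, ENNReal.div_eq_top] at htop
      rcases htop with ⟨_, h⟩ | ⟨h, _⟩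
      · exact hc0 h
      · exact hDt h
    rw [hDtop]
    exact le_top

/-- For any admissible sequence of partitions and any `ε > 0`,
`sup_a Σ_n 2^{n/2} diam(𝒜_n(a)) ≥ ε √(log N(A, ρ, ε)) / √2`; consequently the same
lower bound holds for `γ₂(A, ρ)`. -/
theorem gamma2_lower_bound {ε : ℝ} (hε : 0 < ε) :
    (∀ (𝒜 : ℕ → Set (Set α)) (c : ℕ → α → Set α), IsAdmissible 𝒜 → IsCellOf 𝒜 c →
      ENNReal.ofReal (ε * Real.sqrt (Real.log (coveringNumber α ε)) / Real.sqrt 2) ≤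
        ⨆ a : α, ∑' n : ℕ, (2 : ℝ≥0∞) ^ ((n : ℝ) / 2) * EMetric.diam (c n a)) ∧
    ENNReal.ofReal (ε * Real.sqrt (Real.log (coveringNumber α ε)) / Real.sqrt 2) ≤
      gamma2 α := by
  constructor
  · exact fun 𝒜 c hA hc => gamma2_main_bound' hε 𝒜 c hA hc
  · exact le_iInf fun p => gamma2_main_bound' hε p.1.1 p.1.2 p.2.1 p.2.2
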